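/- Let n = 2k with k ≥ 2, and define the Boolean function f_n : {0,1}ⁿ → {0,1} by f_n(x) = 1 if and only if |x| ≥ k+1, or (|x| ≥ k and for every j ∈ {1,…,k} not both x_{2j−1} = 1 and x_{2j} = 1), where |x| = Σᵢ xᵢ. Let M = {(2j−1, 2j) : 1 ≤ j ≤ k} and let N(k) = k(k−1)/2. Define q(x) = Σ_{i=1}^{n} xᵢ + (1/N(k)) · Σ_{1 ≤ i < j ≤ n, (i,j) ∉ M} xᵢ xⱼ. Then for every x ∈ {0,1}ⁿ, f_n(x) = 1 if and only if q(x) ≥ k + 1. In particular, f_n has a positive QTF representation of size O(n²). -/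

import Mathlib

open Finset

/-- Evaluation of a multilinear real polynomial in `n` variables given by its coefficient
function `c` (where `c S` is the coefficient of the monomial `∏ i ∈ S, x i`). -/
noncomputable def mEval {n : ℕ} (c : Finset (Fin n) → ℝ) (x : Fin n → ℝ) : ℝ :=
  ∑ S : Finset (Fin n), c S * ∏ i ∈ S, x i

/-- The real value of a Boolean. -/
noncomputable def bval (b : Bool) : ℝ := if b then 1 else 0

/-- The weight (number of ones) of a Boolean vector. -/
def wt {n : ℕ} (x : Fin n → Bool) : ℕ := ∑ i, if x i then 1 else 0

-- The number of terms (size) of a multilinear polynomial given by its coefficients.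
open Classical in
noncomputable def nTerms {n : ℕ} (c : Finset (Fin n) → ℝ) : ℕ :=
  (Finset.univ.filter (fun S => c S ≠ 0)).card

/- ### Auxiliary counting lemmas -/

lemma QTFaux.pair_count (n : ℕ) (x : Fin n → Bool) :
    2 * (∑ i : Fin n, ∑ j : Fin n, if i < j ∧ x i = true ∧ x j = true then 1 else 0) + wt x
      = wt x * wt x := by
  have hswap : (∑ i : Fin n, ∑ j : Fin n, if j < i ∧ x i = true ∧ x j = true then 1 else 0)
      = ∑ i : Fin n, ∑ j : Fin n, if i < j ∧ x i = true ∧ x j = true then 1 else 0 := by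
    rw [Finset.sum_comm]
    refine Finset.sum_congr rfl fun i _ => Finset.sum_congr rfl fun j _ => ?_
    exact if_congr (by tauto) rfl rfl
  have hdiag : (∑ i : Fin n, ∑ j : Fin n, if i = j ∧ x i = true ∧ x j = true then 1 else 0)
      = wt x := by
    unfold wt
    refine Finset.sum_congr rfl fun i _ => ?_
    rw [Finset.sum_eq_single i]
    · by_cases h : x i = true <;> simp [h]
    · intro j _ hji; simp [Ne.symm hji]
    · simp
  have key : wt x * wt x =
      (∑ i : Fin n, ∑ j : Fin n, if i < j ∧ x i = true ∧ x j = true then 1 else 0)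
      + ((∑ i : Fin n, ∑ j : Fin n, if j < i ∧ x i = true ∧ x j = true then 1 else 0)
      + (∑ i : Fin n, ∑ j : Fin n, if i = j ∧ x i = true ∧ x j = true then 1 else 0)) := by
    unfold wt
    rw [Finset.sum_mul_sum, ← Finset.sum_add_distrib, ← Finset.sum_add_distrib]
    refine Finset.sum_congr rfl fun i _ => ?_
    rw [← Finset.sum_add_distrib, ← Finset.sum_add_distrib]
    refine Finset.sum_congr rfl fun j _ => ?_
    rcases lt_trichotomy i j with h | h | h
    · cases hi : x i <;> cases hj : x j <;> simp [h, lt_asymm h, h.ne, hi, hj]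
    · subst h; by_cases hc : x i = true <;> simp [hc, lt_irrefl]
    · cases hi : x i <;> cases hj : x j <;> simp [h, lt_asymm h, h.ne', hi, hj]
  rw [key, hswap, hdiag]; ring

lemma QTFaux.pair_split (n : ℕ) (x : Fin n → Bool) :
    (∑ i : Fin n, ∑ j : Fin n, if i < j ∧ x i = true ∧ x j = true then 1 else 0)
      = (∑ i : Fin n, ∑ j : Fin n,
          if (i < j ∧ ¬((j : ℕ) = (i : ℕ) + 1 ∧ Even (i : ℕ))) ∧ x i = true ∧ x j = true
          then 1 else 0)
      + (∑ i : Fin n, ∑ j : Fin n,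
          if (i < j ∧ ((j : ℕ) = (i : ℕ) + 1 ∧ Even (i : ℕ))) ∧ x i = true ∧ x j = true
          then 1 else 0) := by
  rw [← Finset.sum_add_distrib]
  refine Finset.sum_congr rfl fun i _ => ?_
  rw [← Finset.sum_add_distrib]
  refine Finset.sum_congr rfl fun j _ => ?_
  by_cases h1 : i < j <;> by_cases h2 : (j : ℕ) = (i : ℕ) + 1 ∧ Even (i : ℕ) <;>
    by_cases h3 : x i = true ∧ x j = true <;> simp [h1, h2, h3]

lemma QTFaux.matched_zero_iff (k : ℕ) (x : Fin (2 * k) → Bool) :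
    (∑ i : Fin (2 * k), ∑ j : Fin (2 * k),
        if (i < j ∧ ((j : ℕ) = (i : ℕ) + 1 ∧ Even (i : ℕ))) ∧ x i = true ∧ x j = true
        then 1 else 0) = 0
      ↔ ∀ j : Fin k, ¬(x ⟨2 * j, by have := j.2; omega⟩ = true ∧ x ⟨2 * j + 1, by have := j.2; omega⟩ = true) := by
  rw [Finset.sum_eq_zero_iff]
  constructor
  · intro h j hj
    have hi := h ⟨2 * (j : ℕ), by omega⟩ (Finset.mem_univ _)
    rw [Finset.sum_eq_zero_iff] at hi
    have h2 := hi ⟨2 * (j : ℕ) + 1, by omega⟩ (Finset.mem_univ _)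
    rw [ite_eq_right_iff] at h2
    exact one_ne_zero
      (h2 ⟨⟨by simp [Fin.lt_def], by simp, by simp [Nat.even_iff]⟩, hj.1, hj.2⟩)
  · intro h i _
    rw [Finset.sum_eq_zero_iff]
    intro j _
    rw [ite_eq_right_iff]
    rintro ⟨⟨hlt, hj1, hev⟩, hxi, hxj⟩
    exfalso
    obtain ⟨m, hm⟩ := hev
    have hmk : m < k := by omega
    apply h ⟨m, hmk⟩
    have e1 : (⟨2 * m, by omega⟩ : Fin (2 * k)) = i := by
      apply Fin.ext; simp; omega
    have e2 : (⟨2 * m + 1, by omega⟩ : Fin (2 * k)) = j := by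
      apply Fin.ext; simp; omega
    constructor
    · simpa [e1] using hxi
    · simpa [e2] using hxj

lemma QTFaux.main_nat (k w p m N : ℕ) (hk : 2 ≤ k) (hN : N = k * (k - 1) / 2)
    (hw : 2 * (p + m) + w = w * w) :
    (k + 1 ≤ w ∨ (k ≤ w ∧ m = 0)) ↔ N * (k + 1) ≤ N * w + p := by
  have hk1 : k - 1 + 1 = k := by omega
  have he : Even ((k - 1) * ((k - 1) + 1)) := Nat.even_mul_succ_self _
  rw [hk1] at he
  have h2N : 2 * N = k * (k - 1) := by
    rw [hN]
    exact Nat.mul_div_cancel' ((by rwa [mul_comm] at he : Even (k * (k - 1))).two_dvd)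
  have hkk : k * (k - 1) + k = k * k := by
    calc k * (k - 1) + k = k * ((k - 1) + 1) := by ring
      _ = k * k := by rw [hk1]
  have e1 : 2 * N + k = k * k := by rw [h2N]; exact hkk
  have hsplit : k * (k - 1) = (k - 1) * (k - 1) + (k - 1) := by
    calc k * (k - 1) = ((k - 1) + 1) * (k - 1) := by rw [hk1]
      _ = (k - 1) * (k - 1) + (k - 1) := by ring
  have hNpos : 1 ≤ N := by
    have h2 : 2 * 1 ≤ k * (k - 1) := Nat.mul_le_mul hk (by omega)
    omega
  constructor
  · rintro (hw1 | ⟨hkw, hm0⟩)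
    · calc N * (k + 1) ≤ N * w := Nat.mul_le_mul_left _ hw1
        _ ≤ N * w + p := Nat.le_add_right _ _
    · rcases Nat.lt_or_ge w (k + 1) with hlt | hge
      · have hwk : w = k := by omega
        subst hwk hm0
        have hp : p = N := by
          rw [add_zero] at hw
          generalize hG : w * w = K at hw e1
          omega
        calc N * (w + 1) = N * w + p := by rw [hp]; ring
          _ ≤ N * w + p := le_rfl
      · calc N * (k + 1) ≤ N * w := Nat.mul_le_mul_left _ hge
          _ ≤ N * w + p := Nat.le_add_right _ _
  · intro hle
    by_contra hno
    push_neg at hno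
    obtain ⟨hno1, hno2⟩ := hno
    have hwk : w ≤ k := by omega
    have hpltN : p < N := by
      rcases Nat.lt_or_ge w k with hlt | hge
      · have hwle : w ≤ k - 1 := by omega
        have hww : w * w ≤ (k - 1) * (k - 1) := Nat.mul_le_mul hwle hwle
        have h2N' : 2 * N = (k - 1) * (k - 1) + (k - 1) := by rw [h2N]; exact hsplit
        generalize hG1 : w * w = W at hw hww
        generalize hG2 : (k - 1) * (k - 1) = A at hww h2N'
        omega
      · have hwk' : w = k := by omega
        subst hwk'
        have hm1 : 1 ≤ m := by
          rcases Nat.eq_zero_or_pos m with h0 | h1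
          · exact absurd h0 (hno2 hge)
          · exact h1
        generalize hG : w * w = K at hw e1
        omega
    have : N * (k + 1) < N * (k + 1) := by
      calc N * (k + 1) ≤ N * w + p := hle
        _ < N * w + N := by omega
        _ = N * (w + 1) := by ring
        _ ≤ N * (k + 1) := Nat.mul_le_mul_left _ (by omega)
    omega

/- ### The coefficient function and its properties -/

noncomputable def QTFaux.coef (n : ℕ) (cN : ℝ) (T : Finset (Fin n)) : ℝ :=
  (∑ i : Fin n, if T = {i} then (1 : ℝ) else 0)
  + ∑ i : Fin n, ∑ j : Fin n,
      if i < j ∧ ¬((j : ℕ) = (i : ℕ) + 1 ∧ Even (i : ℕ)) then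
        (if T = {i, j} then cN else 0) else 0

namespace QTFaux

variable (n : ℕ) (cN : ℝ)

lemma coef_shape {T : Finset (Fin n)} (h : coef n cN T ≠ 0) :
    ∃ i j : Fin n, T = {i, j} := by
  by_contra hc
  push_neg at hc
  apply h
  unfold coef
  rw [Finset.sum_eq_zero, Finset.sum_eq_zero, add_zero]
  · intro i _
    rw [Finset.sum_eq_zero]
    intro j _
    have : T ≠ ({i, j} : Finset (Fin n)) := hc i j
    simp [this]
  · intro i _
    have : T ≠ ({i, i} : Finset (Fin n)) := hc i i
    rw [Finset.pair_eq_singleton] at this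
    simp [this]

lemma coef_nonneg (hcN : 0 ≤ cN) (T : Finset (Fin n)) : 0 ≤ coef n cN T := by
  unfold coef
  refine add_nonneg (Finset.sum_nonneg fun i _ => ?_)
    (Finset.sum_nonneg fun i _ => Finset.sum_nonneg fun j _ => ?_) <;>
    · split_ifs <;> first | positivity | exact hcN

lemma coef_card {T : Finset (Fin n)} (h : coef n cN T ≠ 0) : T.card ≤ 2 := by
  obtain ⟨i, j, rfl⟩ := coef_shape n cN h
  exact (Finset.card_insert_le _ _).trans (by simp)

lemma coef_empty : coef n cN ∅ = 0 := by
  unfold coef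
  rw [Finset.sum_eq_zero, Finset.sum_eq_zero, add_zero]
  · intro i _
    rw [Finset.sum_eq_zero]
    intro j _
    have : (∅ : Finset (Fin n)) ≠ {i, j} :=
      Ne.symm (Finset.insert_ne_empty _ _)
    simp [this]
  · intro i _
    have : (∅ : Finset (Fin n)) ≠ {i} := Ne.symm (Finset.singleton_ne_empty _)
    simp [this]

lemma coef_terms : nTerms (coef n cN) ≤ n ^ 2 := by
  unfold nTerms
  have hsub : (Finset.univ.filter (fun S => coef n cN S ≠ 0)) ⊆
      (Finset.univ : Finset (Fin n × Fin n)).image (fun p => ({p.1, p.2} : Finset (Fin n))) := by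
    intro S hS
    rw [Finset.mem_filter] at hS
    obtain ⟨i, j, rfl⟩ := coef_shape n cN hS.2
    exact Finset.mem_image.2 ⟨(i, j), Finset.mem_univ _, rfl⟩
  calc (Finset.univ.filter (fun S => coef n cN S ≠ 0)).card
      ≤ _ := Finset.card_le_card hsub
    _ ≤ (Finset.univ : Finset (Fin n × Fin n)).card := Finset.card_image_le
    _ = n ^ 2 := by simp [sq]

lemma coef_eval (y : Fin n → ℝ) :
    mEval (coef n cN) y = (∑ i, y i)
      + ∑ i : Fin n, ∑ j : Fin n,
          if i < j ∧ ¬((j : ℕ) = (i : ℕ) + 1 ∧ Even (i : ℕ)) then cN * (y i * y j) else 0 := by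
  unfold mEval coef
  rw [Finset.sum_congr rfl (fun S _ => add_mul (∑ i : Fin n, if S = {i} then (1:ℝ) else 0) _ _),
    Finset.sum_add_distrib]
  congr 1
  · calc ∑ S : Finset (Fin n), (∑ i : Fin n, if S = {i} then (1:ℝ) else 0) * ∏ e ∈ S, y e
        = ∑ S : Finset (Fin n), ∑ i : Fin n, (if S = {i} then (1:ℝ) else 0) * ∏ e ∈ S, y e := by
          exact Finset.sum_congr rfl fun S _ => Finset.sum_mul _ _ _
      _ = ∑ i : Fin n, ∑ S : Finset (Fin n), (if S = {i} then (1:ℝ) else 0) * ∏ e ∈ S, y e :=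
          Finset.sum_comm
      _ = ∑ i, y i := by
          refine Finset.sum_congr rfl fun i _ => ?_
          rw [Finset.sum_eq_single ({i} : Finset (Fin n))]
          · simp
          · intro S _ hS; simp [hS]
          · simp
  · calc ∑ S : Finset (Fin n), (∑ i : Fin n, ∑ j : Fin n,
          if i < j ∧ ¬((j : ℕ) = (i : ℕ) + 1 ∧ Even (i : ℕ)) then
            (if S = {i, j} then cN else 0) else 0) * ∏ e ∈ S, y e
        = ∑ S : Finset (Fin n), ∑ i : Fin n, ∑ j : Fin n,
          (if i < j ∧ ¬((j : ℕ) = (i : ℕ) + 1 ∧ Even (i : ℕ)) then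
            (if S = {i, j} then cN else 0) else 0) * ∏ e ∈ S, y e := by
          refine Finset.sum_congr rfl fun S _ => ?_
          rw [Finset.sum_mul]
          exact Finset.sum_congr rfl fun i _ => Finset.sum_mul _ _ _
      _ = ∑ i : Fin n, ∑ j : Fin n, ∑ S : Finset (Fin n),
          (if i < j ∧ ¬((j : ℕ) = (i : ℕ) + 1 ∧ Even (i : ℕ)) then
            (if S = {i, j} then cN else 0) else 0) * ∏ e ∈ S, y e := by
          rw [Finset.sum_comm]
          exact Finset.sum_congr rfl fun i _ => Finset.sum_comm
      _ = ∑ i : Fin n, ∑ j : Fin n,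
          if i < j ∧ ¬((j : ℕ) = (i : ℕ) + 1 ∧ Even (i : ℕ)) then cN * (y i * y j) else 0 := by
          refine Finset.sum_congr rfl fun i _ => Finset.sum_congr rfl fun j _ => ?_
          by_cases hP : i < j ∧ ¬((j : ℕ) = (i : ℕ) + 1 ∧ Even (i : ℕ))
          · rw [if_pos hP,
              Finset.sum_congr rfl (fun S _ => by rw [if_pos hP]),
              Finset.sum_eq_single ({i, j} : Finset (Fin n))]
            · simp [Finset.prod_pair hP.1.ne]
            · intro S _ hS; simp [hS]
            · simp
          · rw [if_neg hP]
            exact Finset.sum_eq_zero fun S _ => by rw [if_neg hP, zero_mul]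

end QTFaux

/- ### Cast lemmas -/

lemma QTFaux.wt_cast (n : ℕ) (x : Fin n → Bool) :
    (∑ i, bval (x i)) = ((wt x : ℕ) : ℝ) := by
  unfold wt
  rw [Nat.cast_sum]
  exact Finset.sum_congr rfl fun i _ => by cases h : x i <;> simp [bval, h]

lemma QTFaux.P_cast (n : ℕ) (x : Fin n → Bool) :
    (∑ i : Fin n, ∑ j : Fin n,
        if i < j ∧ ¬((j : ℕ) = (i : ℕ) + 1 ∧ Even (i : ℕ)) then bval (x i) * bval (x j) else 0)
      = (((∑ i : Fin n, ∑ j : Fin n,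
          if (i < j ∧ ¬((j : ℕ) = (i : ℕ) + 1 ∧ Even (i : ℕ))) ∧ x i = true ∧ x j = true
          then 1 else 0) : ℕ) : ℝ) := by
  rw [Nat.cast_sum]
  refine Finset.sum_congr rfl fun i _ => ?_
  rw [Nat.cast_sum]
  refine Finset.sum_congr rfl fun j _ => ?_
  by_cases hc : i < j ∧ ¬((j : ℕ) = (i : ℕ) + 1 ∧ Even (i : ℕ))
  · cases hi : x i <;> cases hj : x j <;> simp [bval, hc, hi, hj]
  · rw [if_neg hc, if_neg (fun h => hc h.1)]
    simp

/-- The function `f_n` (with `n = 2k`, `k ≥ 2`) has the positive quadratic threshold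
representation `q(x) = Σ_i x_i + (1/N(k)) Σ_{i<j, (i,j)∉M} x_i x_j ≥ k + 1` where
`N(k) = k(k-1)/2`, and `M` is the set of block pairs; in particular `f_n` has a positive
QTF representation of size `O(n²)`. (Variables are indexed `0, …, 2k-1`; the `j`-th block
consists of indices `2j, 2j+1`, so a pair `i < j` is in `M` iff `j = i + 1` and `i` is even.) -/
theorem f_n_positive_qtf_upper (k : ℕ) (hk : 2 ≤ k) (f : (Fin (2 * k) → Bool) → Bool)
    (hf : ∀ x, f x = true ↔
      (k + 1 ≤ wt x ∨ (k ≤ wt x ∧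
        ∀ j : Fin k, ¬(x ⟨2 * j, by omega⟩ = true ∧ x ⟨2 * j + 1, by omega⟩ = true)))) :
    (∀ x : Fin (2 * k) → Bool,
      f x = true ↔
        (k : ℝ) + 1 ≤ (∑ i, bval (x i)) +
          (1 / ((k * (k - 1) / 2 : ℕ) : ℝ)) *
            ∑ i : Fin (2 * k), ∑ j : Fin (2 * k),
              if i < j ∧ ¬((j : ℕ) = (i : ℕ) + 1 ∧ Even (i : ℕ)) then bval (x i) * bval (x j)
              else 0) ∧
    ∃ coef : Finset (Fin (2 * k)) → ℝ,
      (∀ T, coef T ≠ 0 → T.card ≤ 2) ∧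
      (∀ T, 0 ≤ coef T) ∧
      coef ∅ = 0 ∧
      nTerms coef ≤ (2 * k) ^ 2 ∧
      (∀ x : Fin (2 * k) → Bool,
        mEval coef (fun i => bval (x i)) =
          (∑ i, bval (x i)) +
            (1 / ((k * (k - 1) / 2 : ℕ) : ℝ)) *
              ∑ i : Fin (2 * k), ∑ j : Fin (2 * k),
                if i < j ∧ ¬((j : ℕ) = (i : ℕ) + 1 ∧ Even (i : ℕ)) then bval (x i) * bval (x j)
                else 0) := by
  set N : ℕ := k * (k - 1) / 2 with hNdef
  have hNpos : 0 < N := by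
    have h2 : 2 * 1 ≤ k * (k - 1) := Nat.mul_le_mul hk (by omega)
    have : 1 ≤ k * (k - 1) / 2 := (Nat.le_div_iff_mul_le (by norm_num)).2 (by omega)
    omega
  have hNr : (0 : ℝ) < (N : ℝ) := by exact_mod_cast hNpos
  constructor
  · intro x
    set w : ℕ := wt x with hwdef
    set p : ℕ := ∑ i : Fin (2 * k), ∑ j : Fin (2 * k),
        if (i < j ∧ ¬((j : ℕ) = (i : ℕ) + 1 ∧ Even (i : ℕ))) ∧ x i = true ∧ x j = true
        then 1 else 0 with hpdef
    set m : ℕ := ∑ i : Fin (2 * k), ∑ j : Fin (2 * k),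
        if (i < j ∧ ((j : ℕ) = (i : ℕ) + 1 ∧ Even (i : ℕ))) ∧ x i = true ∧ x j = true
        then 1 else 0 with hmdef
    have hw : 2 * (p + m) + w = w * w := by
      rw [hpdef, hmdef, ← QTFaux.pair_split (2 * k) x]
      exact QTFaux.pair_count (2 * k) x
    have hreal : ((k : ℝ) + 1 ≤ (w : ℝ) + (1 / (N : ℝ)) * (p : ℝ))
        ↔ (N * (k + 1) ≤ N * w + p) := by
      rw [← mul_le_mul_iff_right₀ hNr]
      have hNne : (N : ℝ) ≠ 0 := ne_of_gt hNr
      rw [show (N : ℝ) * ((w : ℝ) + (1 / (N : ℝ)) * (p : ℝ)) = (N : ℝ) * (w : ℝ) + (p : ℝ) by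
        field_simp]
      rw [show (N : ℝ) * ((k : ℝ) + 1) = ((N * (k + 1) : ℕ) : ℝ) by push_cast; ring,
        show (N : ℝ) * (w : ℝ) + (p : ℝ) = ((N * w + p : ℕ) : ℝ) by push_cast; ring,
        Nat.cast_le]
    rw [hf x, QTFaux.wt_cast (2 * k) x, QTFaux.P_cast (2 * k) x,
      ← QTFaux.matched_zero_iff k x, ← hwdef, ← hpdef, ← hmdef, hreal,
      QTFaux.main_nat k w p m N hk hNdef hw]
  · refine ⟨QTFaux.coef (2 * k) (1 / (N : ℝ)), fun T => QTFaux.coef_card _ _,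
      QTFaux.coef_nonneg _ _ (by positivity), QTFaux.coef_empty _ _,
      QTFaux.coef_terms _ _, fun x => ?_⟩
    rw [QTFaux.coef_eval (2 * k) (1 / (N : ℝ)) (fun i => bval (x i)), Finset.mul_sum]
    congr 1
    refine Finset.sum_congr rfl fun i _ => ?_
    rw [Finset.mul_sum]
    refine Finset.sum_congr rfl fun j _ => ?_
    by_cases hP : i < j ∧ ¬((j : ℕ) = (i : ℕ) + 1 ∧ Even (i : ℕ)) <;>
      simp [hP, mul_comm]
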